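/- For n ≥ 1, the generating polynomial Σ_g q^{area(g)} over Dyck sequences g of length n satisfies the Carlitz recurrence: C_n(q) = Σ_{j=0}^{n-1} q^j C_j(q) C_{n-1-j}(q), with C_0(q) = 1. -/

import Mathlib

/-- A Dyck sequence of length `n`: `g 0 = 0` and `g (i+1) ≤ g i + 1`. -/
def IsDyckSeq {n : ℕ} (g : Fin n → ℕ) : Prop :=
  (∀ i : Fin n, (i : ℕ) = 0 → g i = 0) ∧
  (∀ i j : Fin n, (j : ℕ) = (i : ℕ) + 1 → g j ≤ g i + 1)

/-- The area statistic of a Dyck sequence. -/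
def area {n : ℕ} (g : Fin n → ℕ) : ℕ := ∑ i, g i

/-- The dinv statistic: pairs `i < j` with `g i - g j ∈ {0, 1}`. -/
def dinv {n : ℕ} (g : Fin n → ℕ) : ℕ :=
  (Finset.univ.filter (fun p : Fin n × Fin n =>
    p.1 < p.2 ∧ (g p.1 = g p.2 ∨ g p.1 = g p.2 + 1))).card

/-- The Carlitz `q`-Catalan polynomial: generating polynomial of `area` over
Dyck sequences of length `n`. -/
noncomputable def carlitzCatalan (n : ℕ) : Polynomial ℤ :=
  ∑ᶠ g ∈ {g : Fin n → ℕ | IsDyckSeq g}, Polynomial.X ^ area g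

namespace CarlitzAux

/-- Extend a `Fin k`-indexed sequence to `ℕ` by zero. -/
def ext {k : ℕ} (a : Fin k → ℕ) : ℕ → ℕ := fun i => if h : i < k then a ⟨i, h⟩ else 0

lemma ext_lt {k : ℕ} (a : Fin k → ℕ) {i : ℕ} (h : i < k) : ext a i = a ⟨i, h⟩ := by
  simp [ext, h]

lemma mk_eq {k a b : ℕ} (ha : a < k) (hb : b < k) (h : a = b) :
    (⟨a, ha⟩ : Fin k) = ⟨b, hb⟩ := by subst h; rfl

lemma dyck_zero' {n : ℕ} {g : Fin n → ℕ} (hg : IsDyckSeq g) {i : ℕ} (hi : i < n)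
    (h0 : i = 0) : g ⟨i, hi⟩ = 0 := hg.1 ⟨i, hi⟩ h0

lemma dyck_step' {n : ℕ} {g : Fin n → ℕ} (hg : IsDyckSeq g) {i k : ℕ} (hi : i < n)
    (hk : k < n) (hik : k = i + 1) : g ⟨k, hk⟩ ≤ g ⟨i, hi⟩ + 1 := hg.2 ⟨i, hi⟩ ⟨k, hk⟩ hik

lemma dyck_le' {n : ℕ} {g : Fin n → ℕ} (hg : IsDyckSeq g) :
    ∀ (k : ℕ) (hk : k < n), g ⟨k, hk⟩ ≤ k := by
  intro k
  induction k with
  | zero => intro hk; simp [dyck_zero' hg hk rfl]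
  | succ k ih =>
    intro hk
    have h1 := dyck_step' hg (by omega : k < n) hk rfl
    have h2 := ih (by omega)
    omega

lemma dyck_finite (n : ℕ) : {g : Fin n → ℕ | IsDyckSeq g}.Finite := by
  apply Set.Finite.subset (Set.Finite.pi (t := fun i : Fin n => Set.Iic (i : ℕ))
    (fun i => Set.finite_Iic _))
  intro g hg i _
  exact dyck_le' hg i i.isLt

/-- The finset of Dyck sequences of length `n`. -/
noncomputable def D (n : ℕ) : Finset (Fin n → ℕ) := (dyck_finite n).toFinset

lemma mem_D {n : ℕ} {g : Fin n → ℕ} : g ∈ D n ↔ IsDyckSeq g :=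
  Set.Finite.mem_toFinset _

lemma carlitz_eq (n : ℕ) : carlitzCatalan n = ∑ g ∈ D n, Polynomial.X ^ area g := by
  have h : {g : Fin n → ℕ | IsDyckSeq g} = ↑(D n) := (Set.Finite.coe_toFinset _).symm
  rw [carlitzCatalan, h, finsum_mem_coe_finset]

lemma carlitz_zero : carlitzCatalan 0 = 1 := by
  rw [carlitz_eq]
  have hD : D 0 = {fun _ => 0} := by
    ext g
    simp only [mem_D, Finset.mem_singleton]
    constructor
    · intro _; funext i; exact absurd i.isLt (by omega)
    · intro _; exact ⟨fun i => absurd i.isLt (by omega), fun i => absurd i.isLt (by omega)⟩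
  rw [hD, Finset.sum_singleton]
  have : area (n := 0) (fun _ => 0) = 0 := by simp [area]
  rw [this, pow_zero]

/-- Glue: `b`, then a zero, then `a + 1`. -/
def glue (n j : ℕ) (a : Fin j → ℕ) (b : Fin (n - 1 - j) → ℕ) : Fin n → ℕ :=
  fun i => if (i : ℕ) < n - 1 - j then ext b i
    else if (i : ℕ) = n - 1 - j then 0
    else ext a ((i : ℕ) - (n - j)) + 1

lemma glue_lt {n j : ℕ} (a : Fin j → ℕ) (b : Fin (n - 1 - j) → ℕ) (i : Fin n)
    (h : (i : ℕ) < n - 1 - j) : glue n j a b i = b ⟨i, h⟩ := by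
  simp [glue, h, ext_lt]

lemma glue_mid {n j : ℕ} (a : Fin j → ℕ) (b : Fin (n - 1 - j) → ℕ) (i : Fin n)
    (h : (i : ℕ) = n - 1 - j) : glue n j a b i = 0 := by
  simp [glue, h]

lemma glue_gt {n j : ℕ} (hj : j < n) (a : Fin j → ℕ) (b : Fin (n - 1 - j) → ℕ) (i : Fin n)
    (h : n - 1 - j < (i : ℕ)) {w : ℕ} (hw : w < j) (hiw : (i : ℕ) = (n - j) + w) :
    glue n j a b i = a ⟨w, hw⟩ + 1 := by
  have h1 : ¬ ((i : ℕ) < n - 1 - j) := by omega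
  have h2 : ¬ ((i : ℕ) = n - 1 - j) := by omega
  have h3 : (i : ℕ) - (n - j) = w := by omega
  simp [glue, h1, h2, h3, ext_lt _ hw]

lemma glue_dyck {n j : ℕ} (hj : j < n) {a : Fin j → ℕ} {b : Fin (n - 1 - j) → ℕ}
    (ha : IsDyckSeq a) (hb : IsDyckSeq b) : IsDyckSeq (glue n j a b) := by
  constructor
  · intro i hi
    by_cases h : (i : ℕ) < n - 1 - j
    · rw [glue_lt a b i h]
      exact hb.1 _ hi
    · rw [glue_mid a b i (by omega)]
  · intro i k hk
    have hik := i.isLt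
    have hkk := k.isLt
    rcases lt_trichotomy (k : ℕ) (n - 1 - j) with h | h | h
    · rw [glue_lt a b k h, glue_lt a b i (by omega)]
      exact hb.2 _ _ hk
    · rw [glue_mid a b k h]
      exact Nat.zero_le _
    · rcases eq_or_lt_of_le (show n - 1 - j ≤ (i : ℕ) by omega) with h2 | h2
      · rw [glue_gt hj a b k h (w := 0) (by omega) (by omega), glue_mid a b i h2.symm]
        have h0 : a ⟨0, by omega⟩ = 0 := dyck_zero' ha _ rfl
        omega
      · have hw1 : (i : ℕ) - (n - j) < j := by omega
        have hw2 : (k : ℕ) - (n - j) < j := by omega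
        rw [glue_gt hj a b k h hw2 (by omega), glue_gt hj a b i h2 hw1 (by omega)]
        have := dyck_step' ha hw1 hw2 (by omega)
        omega

lemma area_eq_range {n : ℕ} (g : Fin n → ℕ) :
    area g = ∑ i ∈ Finset.range n, ext g i := by
  rw [area, ← Fin.sum_univ_eq_sum_range (ext g) n]
  exact Finset.sum_congr rfl fun i _ => (ext_lt g i.isLt).symm

lemma glue_area {n j : ℕ} (hj : j < n) (a : Fin j → ℕ) (b : Fin (n - 1 - j) → ℕ) :
    area (glue n j a b) = j + area a + area b := by
  have hr : Finset.range n = Finset.range ((n - 1 - j) + (1 + j)) := by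
    congr 1; omega
  have h1 : ∑ i ∈ Finset.range (n - 1 - j), ext (glue n j a b) i = area b := by
    rw [area_eq_range b]
    refine Finset.sum_congr rfl fun i hi => ?_
    simp only [Finset.mem_range] at hi
    have hin : i < n := by omega
    rw [ext_lt _ hin, ext_lt _ hi, glue_lt a b ⟨i, hin⟩ hi]
  have h2 : ext (glue n j a b) ((n - 1 - j) + 0) = 0 := by
    have hin : (n - 1 - j) + 0 < n := by omega
    rw [ext_lt _ hin, glue_mid a b ⟨(n - 1 - j) + 0, hin⟩ (by simp)]
  have h3 : ∑ x ∈ Finset.range j, ext (glue n j a b) ((n - 1 - j) + (1 + x)) = area a + j := by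
    have key : ∀ x ∈ Finset.range j, ext (glue n j a b) ((n - 1 - j) + (1 + x)) = ext a x + 1 := by
      intro x hx
      simp only [Finset.mem_range] at hx
      have hin : (n - 1 - j) + (1 + x) < n := by omega
      rw [ext_lt _ hin, glue_gt hj a b ⟨(n - 1 - j) + (1 + x), hin⟩
        (by simp only [Fin.val_mk]; omega) hx (by simp only [Fin.val_mk]; omega), ext_lt _ hx]
    rw [Finset.sum_congr rfl key, Finset.sum_add_distrib, Finset.sum_const,
      Finset.card_range, smul_eq_mul, mul_one, ← area_eq_range]
  rw [area_eq_range, hr, Finset.sum_range_add, Finset.sum_range_add, h1,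
    Finset.sum_range_one, h2, h3]
  omega

/-- The set of positions where (the extension of) `g` vanishes. -/
def zeroSet {n : ℕ} (g : Fin n → ℕ) : Finset ℕ :=
  (Finset.range n).filter fun i => ext g i = 0

lemma zeroSet_nonempty {n : ℕ} {g : Fin n → ℕ} (hg : IsDyckSeq g) (hn : 0 < n) :
    (zeroSet g).Nonempty := by
  refine ⟨0, ?_⟩
  simp only [zeroSet, Finset.mem_filter, Finset.mem_range]
  exact ⟨hn, by rw [ext_lt _ hn]; exact dyck_zero' hg hn rfl⟩

/-- The last position where `g` vanishes. -/
def lastZero {n : ℕ} (g : Fin n → ℕ) : ℕ := (zeroSet g).max.unbotD 0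

lemma lastZero_eq_max' {n : ℕ} {g : Fin n → ℕ} (h : (zeroSet g).Nonempty) :
    lastZero g = (zeroSet g).max' h := by
  rw [lastZero, ← Finset.coe_max' h, WithBot.unbotD_coe]

lemma lastZero_mem {n : ℕ} {g : Fin n → ℕ} (hg : IsDyckSeq g) (hn : 0 < n) :
    lastZero g ∈ zeroSet g := by
  rw [lastZero_eq_max' (zeroSet_nonempty hg hn)]
  exact Finset.max'_mem _ _

lemma lastZero_lt {n : ℕ} {g : Fin n → ℕ} (hg : IsDyckSeq g) (hn : 0 < n) :
    lastZero g < n := by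
  have := lastZero_mem hg hn
  simp only [zeroSet, Finset.mem_filter, Finset.mem_range] at this
  exact this.1

lemma lastZero_zero {n : ℕ} {g : Fin n → ℕ} (hg : IsDyckSeq g) (hn : 0 < n) :
    ext g (lastZero g) = 0 := by
  have := lastZero_mem hg hn
  simp only [zeroSet, Finset.mem_filter] at this
  exact this.2

lemma lastZero_spec {n : ℕ} {g : Fin n → ℕ} (hg : IsDyckSeq g) (hn : 0 < n)
    {i : ℕ} (h1 : lastZero g < i) (h2 : i < n) : 1 ≤ ext g i := by
  by_contra hc
  have hz : ext g i = 0 := by omega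
  have hmem : i ∈ zeroSet g := by
    simp only [zeroSet, Finset.mem_filter, Finset.mem_range]
    exact ⟨h2, hz⟩
  have := Finset.le_max' (zeroSet g) i hmem
  rw [← lastZero_eq_max' (zeroSet_nonempty hg hn)] at this
  omega

/-- Split a Dyck sequence at its last zero. -/
def splitMap (n : ℕ) (g : Fin n → ℕ) :
    Σ j : ℕ, (Fin j → ℕ) × (Fin (n - 1 - j) → ℕ) :=
  ⟨n - 1 - lastZero g,
    (fun i => ext g (lastZero g + 1 + (i : ℕ)) - 1,
     fun i => ext g (i : ℕ))⟩

lemma lastZero_glue {n j : ℕ} (hj : j < n) (a : Fin j → ℕ) (b : Fin (n - 1 - j) → ℕ) :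
    lastZero (glue n j a b) = n - 1 - j := by
  have hmn : n - 1 - j < n := by omega
  have hmem : n - 1 - j ∈ zeroSet (glue n j a b) := by
    simp only [zeroSet, Finset.mem_filter, Finset.mem_range]
    exact ⟨hmn, by rw [ext_lt _ hmn, glue_mid a b ⟨n - 1 - j, hmn⟩ rfl]⟩
  have hne : (zeroSet (glue n j a b)).Nonempty := ⟨_, hmem⟩
  rw [lastZero_eq_max' hne]
  refine le_antisymm (Finset.max'_le _ _ _ ?_) (Finset.le_max' _ _ hmem)
  intro y hy
  simp only [zeroSet, Finset.mem_filter, Finset.mem_range] at hy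
  by_contra hc
  have hgt : n - 1 - j < y := by omega
  have hw : y - (n - j) < j := by omega
  rw [ext_lt _ hy.1, glue_gt hj a b ⟨y, hy.1⟩ hgt hw (by simp only [Fin.val_mk]; omega)] at hy
  omega

lemma sigEq {n : ℕ} {j1 j2 : ℕ} (h : j1 = j2)
    {a1 : Fin j1 → ℕ} {b1 : Fin (n - 1 - j1) → ℕ}
    {a2 : Fin j2 → ℕ} {b2 : Fin (n - 1 - j2) → ℕ}
    (ha : ∀ (i : ℕ) (h1 : i < j1) (h2 : i < j2), a1 ⟨i, h1⟩ = a2 ⟨i, h2⟩)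
    (hb : ∀ (i : ℕ) (h1 : i < n - 1 - j1) (h2 : i < n - 1 - j2), b1 ⟨i, h1⟩ = b2 ⟨i, h2⟩) :
    (⟨j1, (a1, b1)⟩ : Σ j : ℕ, (Fin j → ℕ) × (Fin (n - 1 - j) → ℕ)) = ⟨j2, (a2, b2)⟩ := by
  subst h
  have ha' : a1 = a2 := funext fun i => ha i i.isLt i.isLt
  have hb' : b1 = b2 := funext fun i => hb i i.isLt i.isLt
  rw [ha', hb']

lemma split_glue {n : ℕ} (p : Σ j : ℕ, (Fin j → ℕ) × (Fin (n - 1 - j) → ℕ))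
    (hj : p.1 < n) : splitMap n (glue n p.1 p.2.1 p.2.2) = p := by
  obtain ⟨j, a, b⟩ := p
  simp only at hj ⊢
  have hlz := lastZero_glue hj a b
  refine sigEq (by omega) ?_ ?_
  · intro i h1 h2
    show ext (glue n j a b) (lastZero (glue n j a b) + 1 + i) - 1 = a ⟨i, h2⟩
    rw [hlz]
    have hin : n - 1 - j + 1 + i < n := by omega
    rw [ext_lt _ hin, glue_gt hj a b ⟨n - 1 - j + 1 + i, hin⟩
      (by simp only [Fin.val_mk]; omega) h2 (by simp only [Fin.val_mk]; omega)]
    omega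
  · intro i h1 h2
    show ext (glue n j a b) i = b ⟨i, h2⟩
    have hin : i < n := by omega
    rw [ext_lt _ hin, glue_lt a b ⟨i, hin⟩ h2]

lemma glue_split {n : ℕ} {g : Fin n → ℕ} (hg : IsDyckSeq g) (hn : 0 < n) :
    glue n (n - 1 - lastZero g) (splitMap n g).2.1 (splitMap n g).2.2 = g := by
  have hm := lastZero_lt hg hn
  have hjn : n - 1 - lastZero g < n := by omega
  have hmback : n - 1 - (n - 1 - lastZero g) = lastZero g := by omega
  show glue n (n - 1 - lastZero g) (fun i : Fin (n - 1 - lastZero g) => ext g (lastZero g + 1 + (i : ℕ)) - 1)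
    (fun i : Fin (n - 1 - (n - 1 - lastZero g)) => ext g (i : ℕ)) = g
  funext i
  have hilt := i.isLt
  have hieta : (⟨(i : ℕ), i.isLt⟩ : Fin n) = i := rfl
  rcases lt_trichotomy (i : ℕ) (n - 1 - (n - 1 - lastZero g)) with h | h | h
  · rw [glue_lt _ _ i h]
    show ext g (i : ℕ) = g i
    rw [ext_lt _ i.isLt, hieta]
  · rw [glue_mid _ _ i h]
    have hz := lastZero_zero hg hn
    rw [ext_lt _ (by omega : lastZero g < n)] at hz
    have hieq : i = (⟨lastZero g, by omega⟩ : Fin n) := by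
      refine Fin.ext ?_
      show (i : ℕ) = lastZero g
      omega
    rw [hieq, hz]
  · have hw : (i : ℕ) - (n - (n - 1 - lastZero g)) < n - 1 - lastZero g := by omega
    rw [glue_gt hjn _ _ i h hw (by omega)]
    show ext g (lastZero g + 1 + ((i : ℕ) - (n - (n - 1 - lastZero g)))) - 1 + 1 = g i
    have hival : lastZero g + 1 + ((i : ℕ) - (n - (n - 1 - lastZero g))) = (i : ℕ) := by omega
    rw [hival, ext_lt _ i.isLt, hieta]
    have hpos := lastZero_spec hg hn (i := (i : ℕ)) (by omega) i.isLt
    rw [ext_lt _ i.isLt, hieta] at hpos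
    omega

lemma splitMap_mem {n : ℕ} {g : Fin n → ℕ} (hg : IsDyckSeq g) (hn : 0 < n) :
    splitMap n g ∈ (Finset.range n).sigma (fun j => D j ×ˢ D (n - 1 - j)) := by
  have hm := lastZero_lt hg hn
  have hmlt : lastZero g < n := hm
  simp only [Finset.mem_sigma, Finset.mem_range, Finset.mem_product, splitMap, mem_D]
  refine ⟨by omega, ?_, ?_⟩
  · -- a is Dyck
    constructor
    · intro i hi
      have hib := i.isLt
      have hin : lastZero g + 1 + (i : ℕ) < n := by omega
      show ext g (lastZero g + 1 + (i : ℕ)) - 1 = 0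
      rw [ext_lt _ hin]
      have hstep := dyck_step' hg hmlt hin (by omega)
      have hz := lastZero_zero hg hn
      rw [ext_lt _ hmlt] at hz
      omega
    · intro i k hk
      have hib := i.isLt
      have hkb := k.isLt
      show ext g (lastZero g + 1 + (k : ℕ)) - 1 ≤ ext g (lastZero g + 1 + (i : ℕ)) - 1 + 1
      have hin : lastZero g + 1 + (i : ℕ) < n := by omega
      have hkn : lastZero g + 1 + (k : ℕ) < n := by omega
      rw [ext_lt _ hin, ext_lt _ hkn]
      have hstep := dyck_step' hg hin hkn (by omega)
      have hpos := lastZero_spec hg hn (i := lastZero g + 1 + (i : ℕ)) (by omega) hin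
      rw [ext_lt _ hin] at hpos
      omega
  · -- b is Dyck
    constructor
    · intro i hi
      have hib := i.isLt
      have hin : (i : ℕ) < n := by omega
      show ext g (i : ℕ) = 0
      rw [ext_lt _ hin]
      exact dyck_zero' hg hin hi
    · intro i k hk
      have hib := i.isLt
      have hkb := k.isLt
      have hin : (i : ℕ) < n := by omega
      have hkn : (k : ℕ) < n := by omega
      show ext g (k : ℕ) ≤ ext g (i : ℕ) + 1
      rw [ext_lt _ hin, ext_lt _ hkn]
      exact dyck_step' hg hin hkn hk

end CarlitzAux

open CarlitzAux in
/-- The Carlitz recurrence: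
`C_n(q) = Σ_{j=0}^{n-1} q^j C_j(q) C_{n-1-j}(q)` with `C_0(q) = 1`. -/
theorem carlitz_recurrence :
    carlitzCatalan 0 = 1 ∧
    ∀ n : ℕ, 1 ≤ n →
      carlitzCatalan n =
        ∑ j ∈ Finset.range n,
          Polynomial.X ^ j * carlitzCatalan j * carlitzCatalan (n - 1 - j) := by
  refine ⟨carlitz_zero, fun n hn => ?_⟩
  rw [carlitz_eq]
  calc ∑ g ∈ D n, Polynomial.X ^ area g
      = ∑ p ∈ (Finset.range n).sigma (fun j => D j ×ˢ D (n - 1 - j)),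
          (Polynomial.X : Polynomial ℤ) ^ (p.1 + area p.2.1 + area p.2.2) := by
        symm
        refine Finset.sum_bij' (i := fun p _ => glue n p.1 p.2.1 p.2.2)
          (j := fun g _ => splitMap n g) ?_ ?_ ?_ ?_ ?_
        · intro p hp
          simp only [Finset.mem_sigma, Finset.mem_range, Finset.mem_product, mem_D] at hp
          exact mem_D.mpr (glue_dyck hp.1 hp.2.1 hp.2.2)
        · intro g hg
          exact splitMap_mem (mem_D.mp hg) (by omega)
        · intro p hp
          simp only [Finset.mem_sigma, Finset.mem_range, Finset.mem_product, mem_D] at hp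
          exact split_glue p hp.1
        · intro g hg
          have := glue_split (mem_D.mp hg) (by omega : 0 < n)
          exact this
        · intro p hp
          simp only [Finset.mem_sigma, Finset.mem_range, Finset.mem_product, mem_D] at hp
          rw [glue_area hp.1]
    _ = ∑ j ∈ Finset.range n,
          Polynomial.X ^ j * carlitzCatalan j * carlitzCatalan (n - 1 - j) := by
        rw [Finset.sum_sigma]
        refine Finset.sum_congr rfl fun j _ => ?_
        rw [carlitz_eq, carlitz_eq, mul_assoc, Finset.sum_mul_sum, Finset.mul_sum,
          Finset.sum_product]
        refine Finset.sum_congr rfl fun a _ => ?_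
        rw [Finset.mul_sum]
        refine Finset.sum_congr rfl fun b _ => ?_
        rw [pow_add, pow_add]
        ring
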